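/- Let z ∈ ℝ with z > 0. Define F : ℝ × ℝ → ℝ by F(a, b) = exp((b − a)·log z)/(z + 1) · (z if b < a, and −1 if a ≤ b). Then ∫₀¹ ∫₀¹ τ(τ − 1)·F(σ, τ)²·F(τ, σ)² dσ dτ = −z²/(6(z + 1)⁴). -/

import Mathlib

/-- Worldline integral from the `a₃` Seeley–DeWitt computation: with the `N = 2` fermionic
propagator `F(a, b) = z^(b−a)/(z+1)·(z·θ(a−b) − θ(b−a))` and the coincident-point bosonic
propagator `τ(τ−1)`, one has
`∫₀¹∫₀¹ τ(τ−1)·F(σ,τ)²·F(τ,σ)² dσ dτ = −z²/(6(z+1)⁴)`. -/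
theorem worldline_integral_single_flavor (z : ℝ) (hz : 0 < z) (F : ℝ × ℝ → ℝ)
    (hF : F = fun p => Real.exp ((p.2 - p.1) * Real.log z) / (z + 1) *
      (if p.2 < p.1 then z else -1)) :
    (∫ τ in (0 : ℝ)..1, ∫ σ in (0 : ℝ)..1,
        τ * (τ - 1) * F (σ, τ) ^ 2 * F (τ, σ) ^ 2) =
      -z ^ 2 / (6 * (z + 1) ^ 4) := by
  have key : ∀ τ : ℝ,
      (∫ σ in (0 : ℝ)..1, τ * (τ - 1) * F (σ, τ) ^ 2 * F (τ, σ) ^ 2)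
        = τ * (τ - 1) * (z ^ 2 / (z + 1) ^ 4) := by
    intro τ
    have h0 : ∀ σ : ℝ, σ ≠ τ →
        τ * (τ - 1) * F (σ, τ) ^ 2 * F (τ, σ) ^ 2
          = τ * (τ - 1) * (z ^ 2 / (z + 1) ^ 4) := by
      intro σ hστ
      have he : Real.exp ((τ - σ) * Real.log z) * Real.exp ((σ - τ) * Real.log z) = 1 := by
        rw [← Real.exp_add, show (τ - σ) * Real.log z + (σ - τ) * Real.log z = 0 by ring,
          Real.exp_zero]
      have hprod : F (σ, τ) ^ 2 * F (τ, σ) ^ 2 = z ^ 2 / (z + 1) ^ 4 := by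
        have hsq : F (σ, τ) * F (τ, σ) = -z / ((z + 1) * (z + 1)) := by
          subst hF
          rcases hστ.lt_or_gt with h | h
          · simp only [if_neg (not_lt.2 h.le), if_pos h]
            rw [show Real.exp ((τ - σ) * Real.log z) / (z + 1) * -1 *
                (Real.exp ((σ - τ) * Real.log z) / (z + 1) * z)
                = Real.exp ((τ - σ) * Real.log z) * Real.exp ((σ - τ) * Real.log z) *
                  (-z / ((z + 1) * (z + 1))) by
                  have h1 : (z + 1) ≠ 0 := by positivity
                  field_simp, he, one_mul]
          · simp only [if_pos h, if_neg (not_lt.2 h.le)]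
            rw [show Real.exp ((τ - σ) * Real.log z) / (z + 1) * z *
                (Real.exp ((σ - τ) * Real.log z) / (z + 1) * -1)
                = Real.exp ((τ - σ) * Real.log z) * Real.exp ((σ - τ) * Real.log z) *
                  (-z / ((z + 1) * (z + 1))) by
                  have h1 : (z + 1) ≠ 0 := by positivity
                  field_simp, he, one_mul]
        calc F (σ, τ) ^ 2 * F (τ, σ) ^ 2 = (F (σ, τ) * F (τ, σ)) ^ 2 := by ring
          _ = (-z / ((z + 1) * (z + 1))) ^ 2 := by rw [hsq]
          _ = z ^ 2 / (z + 1) ^ 4 := by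
              have h1 : (z + 1) ≠ 0 := by positivity
              field_simp
      rw [mul_assoc, hprod, mul_assoc]
    have hae : ∀ᵐ σ : ℝ, σ ∈ Set.uIoc (0 : ℝ) 1 →
        τ * (τ - 1) * F (σ, τ) ^ 2 * F (τ, σ) ^ 2
          = τ * (τ - 1) * (z ^ 2 / (z + 1) ^ 4) := by
      have hne : ∀ᵐ σ : ℝ, σ ≠ τ := by
        rw [MeasureTheory.ae_iff]
        simpa using MeasureTheory.measure_singleton τ
      filter_upwards [hne] with σ hσ _
      exact h0 σ hσ
    calc (∫ σ in (0 : ℝ)..1, τ * (τ - 1) * F (σ, τ) ^ 2 * F (τ, σ) ^ 2)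
        = ∫ _σ in (0 : ℝ)..1, τ * (τ - 1) * (z ^ 2 / (z + 1) ^ 4) :=
          intervalIntegral.integral_congr_ae hae
      _ = τ * (τ - 1) * (z ^ 2 / (z + 1) ^ 4) := by simp
  simp_rw [key]
  have hint : (∫ τ in (0 : ℝ)..1, τ * (τ - 1) * (z ^ 2 / (z + 1) ^ 4))
      = (z ^ 2 / (z + 1) ^ 4) * ((1 : ℝ) / 3 - 1 / 2) := by
    have h : ∀ τ : ℝ, τ * (τ - 1) * (z ^ 2 / (z + 1) ^ 4)
        = (z ^ 2 / (z + 1) ^ 4) * (τ ^ 2) - (z ^ 2 / (z + 1) ^ 4) * τ := fun τ => by ring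
    simp_rw [h]
    rw [intervalIntegral.integral_sub
        ((show Continuous fun τ : ℝ => (z ^ 2 / (z + 1) ^ 4) * τ ^ 2 from continuous_const.mul (continuous_pow 2)).intervalIntegrable 0 1)
        ((show Continuous fun τ : ℝ => (z ^ 2 / (z + 1) ^ 4) * τ from continuous_const.mul continuous_id').intervalIntegrable 0 1),
      intervalIntegral.integral_const_mul, intervalIntegral.integral_const_mul,
      integral_pow, integral_id]
    norm_num
    ring
  rw [hint]
  have h1 : (z + 1) ≠ 0 := by positivity
  field_simp
  ring
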